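/- Let u be a time-global classical solution of problem (B) with initial data u0 ∈ C^1([-1,1]) satisfying u0(x) ≤ φ0(x) + u0(0) for all x ∈ (-1,1), where φ0(x) := -(2/π)·ln(cos(πx/2)). Then u(x,t) < φ0(x) + u0(0) + (π/2)·t for all x ∈ (-1,1) and t > 0. -/

import Mathlib

open Real

section AuxStmt12
open Set Filter Topology

private lemma cos_half_pos' {x : ℝ} (hx : x ∈ Set.Ioo (-1:ℝ) 1) : 0 < Real.cos (π * x / 2) := by
  apply Real.cos_pos_of_mem_Ioo
  constructor
  · nlinarith [Real.pi_pos, hx.1, hx.2]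
  · nlinarith [Real.pi_pos, hx.1, hx.2]

private lemma hasDerivAt_lin' (x : ℝ) : HasDerivAt (fun y : ℝ => π * y / 2) (π / 2) x := by
  simpa using ((hasDerivAt_id x).const_mul π).div_const 2

private lemma hasDerivAt_F' {x : ℝ} (hx : x ∈ Set.Ioo (-1:ℝ) 1) :
    HasDerivAt (fun y => -(2/π) * Real.log (Real.cos (π * y / 2))) (Real.tan (π * x / 2)) x := by
  have hc : Real.cos (π * x / 2) ≠ 0 := (cos_half_pos' hx).ne'
  have h2 : HasDerivAt (fun y => Real.cos (π * y / 2)) (-Real.sin (π * x / 2) * (π/2)) x :=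
    (hasDerivAt_lin' x).cos
  have h3 := (h2.log hc).const_mul (-(2/π))
  refine h3.congr_deriv ?_
  rw [Real.tan_eq_sin_div_cos]
  field_simp

private lemma hasDerivAt_tanhalf' {x : ℝ} (hx : x ∈ Set.Ioo (-1:ℝ) 1) :
    HasDerivAt (fun y => Real.tan (π * y / 2)) (π/2 * (1 + Real.tan (π * x / 2)^2)) x := by
  have hc : Real.cos (π * x / 2) ≠ 0 := (cos_half_pos' hx).ne'
  have h2 := (Real.hasDerivAt_tan hc).comp x (hasDerivAt_lin' x)
  refine h2.congr_deriv ?_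
  have ht : (0:ℝ) < 1 + Real.tan (π * x / 2)^2 := by positivity
  have h1 : (1 + Real.tan (π * x / 2)^2) * Real.cos (π * x / 2)^2 = 1 := by
    rw [← Real.inv_one_add_tan_sq hc]
    field_simp
  have hc2 : Real.cos (π * x / 2)^2 ≠ 0 := pow_ne_zero 2 hc
  field_simp
  linear_combination -h1

private lemma second_deriv_test_min' {f : ℝ → ℝ} {a : ℝ}
    (hf : ∀ᶠ y in 𝓝 a, DifferentiableAt ℝ f y)
    (hmin : IsLocalMin f a) (hd : DifferentiableAt ℝ (deriv f) a) :
    0 ≤ deriv (deriv f) a := by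
  by_contra hneg
  push_neg at hneg
  have h0 : deriv f a = 0 := hmin.deriv_eq_zero
  have hslope : Tendsto (slope (deriv f) a) (𝓝[≠] a) (𝓝 (deriv (deriv f) a)) :=
    hasDerivAt_iff_tendsto_slope.1 hd.hasDerivAt
  have hev : ∀ᶠ x in 𝓝[≠] a, slope (deriv f) a x < 0 :=
    hslope.eventually (Iio_mem_nhds hneg)
  rw [eventually_nhdsWithin_iff] at hev
  obtain ⟨δ₁, hδ₁, hball₁⟩ := Metric.eventually_nhds_iff.1 (hev.and (hf.and hmin))
  set δ := δ₁ / 2 with hδdef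
  have hδ : 0 < δ := by positivity
  have hsub : Set.Icc a (a + δ) ⊆ Metric.ball a δ₁ := by
    intro y hy
    simp only [Metric.mem_ball, Real.dist_eq]
    rw [abs_lt]
    constructor <;> [linarith [hy.1]; linarith [hy.2]]
  have hcont : ContinuousOn f (Set.Icc a (a + δ)) := by
    intro y hy
    exact ((hball₁ (hsub hy)).2.1).continuousAt.continuousWithinAt
  have hderiv : ∀ y ∈ Set.Ioo a (a + δ), deriv f y < 0 := by
    intro y hy
    have hyb : y ∈ Metric.ball a δ₁ := hsub (Set.mem_Icc.2 ⟨hy.1.le, hy.2.le⟩)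
    have hne : y ≠ a := ne_of_gt hy.1
    have hs := (hball₁ hyb).1 hne
    rw [slope_def_field, h0, sub_zero] at hs
    have hya : 0 < y - a := by linarith [hy.1]
    rcases (div_neg_iff).1 hs with ⟨h1, h2⟩ | ⟨h1, h2⟩
    · linarith
    · exact h1
  have hanti : StrictAntiOn f (Set.Icc a (a + δ)) := by
    apply strictAntiOn_of_deriv_neg (convex_Icc _ _) hcont
    rw [interior_Icc]; exact hderiv
  have hlt : f (a + δ) < f a :=
    hanti (Set.mem_Icc.2 ⟨le_refl a, by linarith⟩) (Set.mem_Icc.2 ⟨by linarith, le_refl _⟩)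
      (by linarith)
  have hge : f a ≤ f (a + δ) :=
    (hball₁ (hsub (Set.mem_Icc.2 ⟨by linarith, le_refl _⟩))).2.2
  linarith

private lemma deriv_nonpos_of_left_min' {f : ℝ → ℝ} {t₁ T : ℝ} (h0 : 0 < t₁) (h1 : t₁ ≤ T)
    (hmin : ∀ s ∈ Set.Icc (0:ℝ) T, f t₁ ≤ f s) (hd : DifferentiableAt ℝ f t₁) :
    deriv f t₁ ≤ 0 := by
  have hslope : Tendsto (slope f t₁) (𝓝[<] t₁) (𝓝 (deriv f t₁)) :=
    (hasDerivAt_iff_tendsto_slope.1 hd.hasDerivAt).mono_left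
      (nhdsWithin_mono _ (fun x hx => ne_of_lt hx))
  refine le_of_tendsto hslope ?_
  filter_upwards [Ioo_mem_nhdsLT_of_mem (Set.mem_Ioc.2 ⟨h0, le_refl t₁⟩)] with s hs
  rw [slope_def_field]
  apply div_nonpos_of_nonneg_of_nonpos
  · have := hmin s ⟨hs.1.le, hs.2.le.trans h1⟩
    linarith
  · linarith [hs.2]


private lemma nonneg_of_forall_eps {Z t0 : ℝ} (ht0 : 0 < t0)
    (h : ∀ ε, 0 < ε → 0 ≤ Z + ε * t0) : 0 ≤ Z := by
  by_contra hc
  push_neg at hc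
  have h1 := h (-Z/(2*t0)) (div_pos (by linarith) (by linarith))
  have h2 : -Z/(2*t0)*t0 = -Z/2 := by
    field_simp
  linarith

private lemma final_contra {q S A K P M α γ ε : ℝ}
    (hbig : (π/2 + ε - γ*A) * (1 + (q - S)^2) ≤ π/2*(1+q^2) - α^2*A)
    (hX2K : (q - S)^2 ≤ K^2)
    (hSA1 : -(α*A) ≤ S) (hSA2 : S ≤ α*A)
    (hq1 : -P ≤ q) (hq2 : q ≤ P)
    (hγK : γ*(1+K^2) = α*(α - M))
    (hM : M = π/2*(2*P+1))
    (hA : 0 < A) (hγ : 0 ≤ γ) (hα : 0 < α) (hP : 0 ≤ P) (hε : 0 < ε) : False := by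
  have hπ : (0:ℝ) < π := Real.pi_pos
  have hαA : 0 ≤ α*A := by positivity
  have p1 : 0 ≤ (P - q) * (α*A + S) := mul_nonneg (by linarith) (by linarith)
  have p2 : 0 ≤ (P + q) * (α*A - S) := mul_nonneg (by linarith) (by linarith)
  have e4 : S*(2*q - S) ≤ (2*P+1)*(α*A) := by linarith [sq_nonneg S, p1, p2, hαA]
  have e4' : π/2*(S*(2*q - S)) ≤ M*(α*A) := by
    have h6 := mul_le_mul_of_nonneg_left e4 (by linarith : (0:ℝ) ≤ π/2)
    rw [hM]; linarith
  have t1 : γ*(1+(q - S)^2) ≤ α*(α - M) := by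
    rw [← hγK]
    linarith [mul_le_mul_of_nonneg_left hX2K hγ]
  have t2 : γ*(1+(q - S)^2)*A ≤ (α*(α - M))*A := mul_le_mul_of_nonneg_right t1 hA.le
  linarith [hbig, e4', t2, hε, mul_nonneg hε.le (sq_nonneg (q - S))]

end AuxStmt12

/-- Partial derivative in `x` of a function `u(x,t)`. -/
noncomputable def ux (u : ℝ → ℝ → ℝ) (x t : ℝ) : ℝ := deriv (fun y => u y t) x

/-- Second partial derivative in `x` of a function `u(x,t)`. -/
noncomputable def uxx (u : ℝ → ℝ → ℝ) (x t : ℝ) : ℝ := deriv (fun y => ux u y t) x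

/-- Partial derivative in `t` of a function `u(x,t)`. -/
noncomputable def ut (u : ℝ → ℝ → ℝ) (x t : ℝ) : ℝ := deriv (fun s => u x s) t

/-- A time-global classical solution of problem (B) with initial data `u0`:
`u` and `u_x` are continuous on `[-1,1] × [0,∞)`, `u` is `C^{2,1}` in
`(-1,1) × (0,∞)` where it satisfies `u_t = u_xx/(1+u_x²)`, with boundary
conditions `u_x(±1,t) = ±u(±1,t)` for `t > 0` and initial condition `u(·,0) = u0`. -/
def IsGlobalSolB (u : ℝ → ℝ → ℝ) (u0 : ℝ → ℝ) : Prop :=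
  ContinuousOn (fun p : ℝ × ℝ => u p.1 p.2) (Set.Icc (-1 : ℝ) 1 ×ˢ Set.Ici (0 : ℝ)) ∧
  ContinuousOn (fun p : ℝ × ℝ => ux u p.1 p.2) (Set.Icc (-1 : ℝ) 1 ×ˢ Set.Ici (0 : ℝ)) ∧
  (∀ t > (0 : ℝ), ∀ x ∈ Set.Ioo (-1 : ℝ) 1,
    DifferentiableAt ℝ (fun y => u y t) x ∧
    DifferentiableAt ℝ (fun y => ux u y t) x ∧
    DifferentiableAt ℝ (fun s => u x s) t ∧
    ut u x t = uxx u x t / (1 + ux u x t ^ 2)) ∧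
  (∀ t > (0 : ℝ), ux u 1 t = u 1 t ∧ ux u (-1) t = - u (-1) t) ∧
  (∀ x ∈ Set.Icc (-1 : ℝ) 1, u x 0 = u0 x)

open Set Filter Topology in
set_option maxHeartbeats 3200000 in
/-- if `u0(x) ≤ φ0(x) + u0(0)` on `(-1,1)`, with
`φ0(x) = -(2/π)·ln(cos(πx/2))`, then
`u(x,t) < φ0(x) + u0(0) + (π/2)t` for all `x ∈ (-1,1)`, `t > 0`. -/
theorem stmt_12 (u0 : ℝ → ℝ)
    (hu0C1 : ContDiffOn ℝ 1 u0 (Set.Icc (-1 : ℝ) 1))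
    (φ0 : ℝ → ℝ) (hφ0 : ∀ x : ℝ, φ0 x = -(2 / π) * Real.log (Real.cos (π * x / 2)))
    (hinit : ∀ x ∈ Set.Ioo (-1 : ℝ) 1, u0 x ≤ φ0 x + u0 0)
    (u : ℝ → ℝ → ℝ) (hu : IsGlobalSolB u u0) :
    ∀ t > (0 : ℝ), ∀ x ∈ Set.Ioo (-1 : ℝ) 1,
      u x t < φ0 x + u0 0 + (π / 2) * t := by
  intro t0 ht0 x0 hx0
  obtain ⟨hcont, hcontux, hpde, _hbc, hinit0⟩ := hu
  have hπ : (0:ℝ) < π := Real.pi_pos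
  -- upper bound for u on the compact [-1,1] × [0,t0]
  obtain ⟨B, hB⟩ := (isCompact_Icc.prod isCompact_Icc).exists_bound_of_continuousOn
    (hcont.mono (Set.prod_mono_right Set.Icc_subset_Ici_self))
  have hBu : ∀ y s, y ∈ Set.Icc (-1:ℝ) 1 → s ∈ Set.Icc (0:ℝ) t0 → u y s ≤ B := by
    intro y s hy hs
    have := hB (y, s) (Set.mk_mem_prod hy hs)
    rw [Real.norm_eq_abs] at this
    exact (le_abs_self _).trans this
  -- choice of r : |x0| < r < 1 with F r large
  have hax : |x0| < 1 := abs_lt.2 ⟨hx0.1, hx0.2⟩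
  have haI : |x0| ∈ Set.Ioo (-1:ℝ) 1 := ⟨lt_of_lt_of_le (by norm_num) (abs_nonneg x0), hax⟩
  have hca : 0 < Real.cos (π * |x0| / 2) := cos_half_pos' haI
  set ε₁ := min (Real.exp (-(π/2) * (B - u0 0 + 1))) (Real.cos (π * |x0| / 2) / 2) with hε₁def
  have hε₁pos : 0 < ε₁ := lt_min (Real.exp_pos _) (by linarith)
  have hε₁lt1 : ε₁ < 1 := by
    have h1 : ε₁ ≤ Real.cos (π * |x0| / 2) / 2 := min_le_right _ _
    have h2 : Real.cos (π * |x0| / 2) ≤ 1 := Real.cos_le_one _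
    linarith
  set r := (2/π) * Real.arccos ε₁ with hrdef
  have hrA : π * r / 2 = Real.arccos ε₁ := by
    rw [hrdef]; field_simp
  have hcosr : Real.cos (π * r / 2) = ε₁ := by
    rw [hrA]; exact Real.cos_arccos (by linarith) (by linarith)
  have hr1 : r < 1 := by
    have h1 : Real.arccos ε₁ < π/2 := Real.arccos_lt_pi_div_two.2 hε₁pos
    have h2 : (0:ℝ) < 2/π := by positivity
    calc r = (2/π) * Real.arccos ε₁ := hrdef
    _ < (2/π) * (π/2) := by exact mul_lt_mul_of_pos_left h1 h2
    _ = 1 := by field_simp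
  have hrx : |x0| < r := by
    by_contra hcon
    push_neg at hcon
    have h1 : Real.arccos ε₁ ≤ π * |x0| / 2 := by
      rw [← hrA]
      linarith [mul_le_mul_of_nonneg_left hcon hπ.le]
    have h2 : Real.cos (π * |x0| / 2) ≤ Real.cos (Real.arccos ε₁) := by
      apply Real.cos_le_cos_of_nonneg_of_le_pi (Real.arccos_nonneg _) ?_ h1
      linarith [mul_le_mul_of_nonneg_left hax.le hπ.le]
    rw [Real.cos_arccos (by linarith) (by linarith)] at h2
    have h3 : ε₁ ≤ Real.cos (π * |x0| / 2) / 2 := min_le_right _ _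
    linarith
  have hr0 : 0 < r := lt_of_le_of_lt (abs_nonneg x0) hrx
  have hFr : B - u0 0 + 1 ≤ -(2/π) * Real.log (Real.cos (π * r / 2)) := by
    rw [hcosr]
    have hlog : Real.log ε₁ ≤ -(π/2) * (B - u0 0 + 1) := by
      calc Real.log ε₁ ≤ Real.log (Real.exp (-(π/2) * (B - u0 0 + 1))) :=
            Real.log_le_log hε₁pos (min_le_left _ _)
      _ = -(π/2) * (B - u0 0 + 1) := Real.log_exp _
    have h2 := mul_le_mul_of_nonpos_left hlog (show -(2/π) ≤ 0 by
      simp only [neg_nonpos]; positivity)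
    have h3 : -(2/π) * (-(π/2) * (B - u0 0 + 1)) = B - u0 0 + 1 := by
      field_simp
    linarith
  -- bound for ux on [-r,r] × [0,t0]
  obtain ⟨K, hK⟩ := (isCompact_Icc.prod isCompact_Icc :
      IsCompact (Set.Icc (-r) r ×ˢ Set.Icc (0:ℝ) t0)).exists_bound_of_continuousOn
    (hcontux.mono (Set.prod_mono (Set.Icc_subset_Icc (by linarith) hr1.le)
      Set.Icc_subset_Ici_self))
  -- constants
  set P := Real.tan (π * r / 2) with hPdef
  have hP0 : 0 ≤ P := by
    rw [hPdef]
    apply Real.tan_nonneg_of_nonneg_of_le_pi_div_two (by positivity)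
      (by linarith [mul_le_mul_of_nonneg_left hr1.le hπ.le])
  set M := π/2 * (2*P + 1) with hMdef
  have hM0 : 0 < M := by rw [hMdef]; exact mul_pos (by linarith) (by linarith)
  have hK2 : (0:ℝ) < 1 + K^2 := by positivity
  set α := M + (1+K^2)*r/t0 + 1 with hαdef
  have hMα : M < α := by
    have h1 : 0 < (1+K^2)*r/t0 := by positivity
    rw [hαdef]; linarith
  have hα0 : 0 < α := hM0.trans hMα
  set γ := α * (α - M) / (1+K^2) with hγdef
  have hγ0 : 0 < γ := by
    apply div_pos (mul_pos hα0 (sub_pos.2 hMα)) hK2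
  have hγK : γ * (1+K^2) = α * (α - M) := by
    rw [hγdef]; field_simp
  clear_value ε₁ r P M α γ
  have hαrγ : α * r < γ * t0 := by
    have hαM : α - M = (1+K^2)*r/t0 + 1 := by rw [hαdef]; ring
    have h1 : γ * t0 = α * r + α * t0/(1+K^2) := by
      rw [hγdef, hαM]; field_simp
    have h2 : 0 < α * t0/(1+K^2) := by positivity
    linarith [h1, h2]
  set c := ((1+α) * Real.exp (γ*t0) * Real.cosh (α*r))⁻¹ with hcdef
  have hc0 : 0 < c := by rw [hcdef]; positivity
  clear_value c
  have key_hb : ∀ y s, |y| ≤ r → 0 ≤ s → s ≤ t0 →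
      c * (Real.exp (γ*s) * Real.cosh (α*y)) ≤ (1+α)⁻¹ := by
    intro y s hy hs0 hst
    have h1 : Real.exp (γ*s) ≤ Real.exp (γ*t0) := Real.exp_le_exp.2
      (by linarith [mul_le_mul_of_nonneg_left hst hγ0.le])
    have h2 : Real.cosh (α*y) ≤ Real.cosh (α*r) := by
      apply Real.cosh_le_cosh.2
      rw [abs_mul, abs_mul, abs_of_pos hα0, abs_of_pos hr0]
      exact mul_le_mul_of_nonneg_left hy hα0.le
    have h3 : c * (Real.exp (γ*s) * Real.cosh (α*y)) ≤
        c * (Real.exp (γ*t0) * Real.cosh (α*r)) := by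
      apply mul_le_mul_of_nonneg_left _ hc0.le
      exact mul_le_mul h1 h2 (Real.cosh_pos _).le (Real.exp_pos _).le
    have h4 : c * (Real.exp (γ*t0) * Real.cosh (α*r)) = (1+α)⁻¹ := by
      rw [hcdef]
      have e1 : Real.exp (γ*t0) ≠ 0 := (Real.exp_pos _).ne'
      have e2 : Real.cosh (α*r) ≠ 0 := (Real.cosh_pos _).ne'
      have e3 : (1+α) ≠ 0 := by positivity
      field_simp
    linarith
  -- main claim with penalization
  have main : ∀ ε, 0 < ε →
      0 ≤ ((-(2/π) * Real.log (Real.cos (π * x0 / 2)) - u x0 t0 -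
        c * (Real.exp (γ*t0) * Real.cosh (α*x0) - Real.cosh (α*r))) +
        (u0 0 + (π/2)*t0)) + ε * t0 := by
    intro ε hε
    set W : ℝ × ℝ → ℝ := fun p =>
      (-(2/π) * Real.log (Real.cos (π * p.1 / 2)) - u p.1 p.2 -
        c * (Real.exp (γ*p.2) * Real.cosh (α*p.1) - Real.cosh (α*r))) +
      (u0 0 + (π/2 + ε)*p.2) with hWdef
    set Q := Set.Icc (-r) r ×ˢ Set.Icc (0:ℝ) t0 with hQdef
    have hQc : IsCompact Q := isCompact_Icc.prod isCompact_Icc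
    have hx0r := abs_lt.1 hrx
    have hx0Q : (x0, t0) ∈ Q :=
      ⟨Set.mem_Icc.2 ⟨hx0r.1.le, hx0r.2.le⟩, Set.mem_Icc.2 ⟨ht0.le, le_refl _⟩⟩
    have hQsub1 : Set.Icc (-r) r ⊆ Set.Ioo (-1:ℝ) 1 := by
      intro y hy
      exact ⟨by linarith [hy.1], by linarith [hy.2]⟩
    have hWcont : ContinuousOn W Q := by
      apply ContinuousOn.add
      · apply ContinuousOn.sub
        · apply ContinuousOn.sub
          · intro p hp
            have hcp : Real.cos (π * p.1 / 2) ≠ 0 := (cos_half_pos' (hQsub1 hp.1)).ne'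
            have hc1 : Continuous (fun p : ℝ×ℝ => Real.cos (π * p.1 / 2)) := by
              fun_prop
            exact (continuousAt_const.mul
              (hc1.continuousAt.log hcp)).continuousWithinAt
          · exact hcont.mono (Set.prod_mono (Set.Icc_subset_Icc (by linarith) hr1.le)
              Set.Icc_subset_Ici_self)
        · fun_prop
      · fun_prop
    obtain ⟨pbar, hpQ, hminOn⟩ := hQc.exists_isMinOn ⟨_, hx0Q⟩ hWcont
    obtain ⟨xb, tb⟩ := pbar
    have hxbI : xb ∈ Set.Icc (-r) r := hpQ.1
    have htbI : tb ∈ Set.Icc (0:ℝ) t0 := hpQ.2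
    suffices hfin : 0 ≤ W (xb, tb) by
      have := hfin.trans (hminOn hx0Q)
      simp only [hWdef] at this
      linarith [this]
    by_contra hneg
    push_neg at hneg
    have hxb1 : xb ∈ Set.Ioo (-1:ℝ) 1 := hQsub1 hxbI
    have hxbabs : |xb| ≤ r := abs_le.2 ⟨hxbI.1, hxbI.2⟩
    -- tb ≠ 0
    have htb0 : tb ≠ 0 := by
      intro h
      have h1 : u xb 0 = u0 xb := hinit0 xb ⟨by linarith [hxb1.1], by linarith [hxb1.2]⟩
      have h2 : u0 xb ≤ -(2/π) * Real.log (Real.cos (π * xb / 2)) + u0 0 := by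
        have := hinit xb hxb1
        rwa [hφ0 xb] at this
      have h3 : Real.cosh (α*xb) ≤ Real.cosh (α*r) := by
        apply Real.cosh_le_cosh.2
        rw [abs_mul, abs_mul, abs_of_pos hα0, abs_of_pos hr0]
        exact mul_le_mul_of_nonneg_left hxbabs hα0.le
      have h4 : W (xb, tb) = (-(2/π) * Real.log (Real.cos (π * xb / 2)) - u xb 0 -
          c * (Real.cosh (α*xb) - Real.cosh (α*r))) + u0 0 := by
        simp only [hWdef, h]
        rw [mul_zero, Real.exp_zero]
        ring
      rw [h4, h1] at hneg
      have h5 : c * (Real.cosh (α*xb) - Real.cosh (α*r)) ≤ 0 :=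
        mul_nonpos_of_nonneg_of_nonpos hc0.le (sub_nonpos.2 h3)
      linarith
    have htbpos : 0 < tb := lt_of_le_of_ne htbI.1 (Ne.symm htb0)
    -- xb is interior
    have hside : ∀ y : ℝ, y = r ∨ y = -r → 0 ≤ W (y, tb) := by
      intro y hy
      have hyabs : |y| = r := by
        rcases hy with h|h <;> rw [h]
        · exact abs_of_pos hr0
        · rw [abs_neg]; exact abs_of_pos hr0
      have hFr' : B - u0 0 + 1 ≤ -(2/π) * Real.log (Real.cos (π * y / 2)) := by
        rcases hy with h|h <;> rw [h]
        · exact hFr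
        · rw [show π * -r/2 = -(π*r/2) by ring, Real.cos_neg]; exact hFr
      have hy1 : y ∈ Set.Icc (-1:ℝ) 1 := by
        constructor <;> [linarith [neg_abs_le y, hyabs.ge, hyabs.le];
          linarith [le_abs_self y, hyabs.le]]
      have hu' : u y tb ≤ B := hBu y tb hy1 htbI
      have hcoshy : Real.cosh (α*y) = Real.cosh (α*r) := by
        conv_lhs => rw [← Real.cosh_abs, abs_mul, abs_of_pos hα0, hyabs]
      have hb := key_hb y tb hyabs.le htbI.1 htbI.2
      have h1α : (1+α)⁻¹ ≤ 1 := by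
        rw [inv_le_one_iff₀]; right; linarith
      have hh : c * (Real.exp (γ*tb) * Real.cosh (α*y) - Real.cosh (α*r)) ≤ 1 := by
        have h6 : 0 ≤ c * Real.cosh (α*r) := mul_nonneg hc0.le (Real.cosh_pos _).le
        have h7 : c * (Real.exp (γ*tb) * Real.cosh (α*y) - Real.cosh (α*r)) =
            c * (Real.exp (γ*tb) * Real.cosh (α*y)) - c * Real.cosh (α*r) := by ring
        linarith
      have hlin : 0 ≤ (π/2 + ε)*tb := mul_nonneg (by linarith) htbI.1
      simp only [hWdef]
      linarith
    have hxbin : xb ∈ Set.Ioo (-r) r := by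
      rcases lt_or_eq_of_le hxbI.1 with h1 | h1
      · rcases lt_or_eq_of_le hxbI.2 with h2 | h2
        · exact ⟨h1, h2⟩
        · exact absurd (hside xb (Or.inl h2)) (not_le.2 hneg)
      · exact absurd (hside xb (Or.inr h1.symm)) (not_le.2 hneg)
    obtain ⟨hud, huxd, hutd, hpdeq⟩ := hpde tb htbpos xb hxb1
    -- x-slice analysis at the interior minimum
    set f : ℝ → ℝ := fun y => W (y, tb) with hfdef
    have hfmin : IsLocalMin f xb := by
      have hev : ∀ᶠ y in 𝓝 xb, f xb ≤ f y := by
        filter_upwards [isOpen_Ioo.mem_nhds hxbin] with y hy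
        exact hminOn (⟨Set.mem_Icc.2 ⟨hy.1.le, hy.2.le⟩, htbI⟩ : (y, tb) ∈ Q)
      exact hev
    have hfd : ∀ y ∈ Set.Ioo (-1:ℝ) 1, HasDerivAt f
        (Real.tan (π*y/2) - ux u y tb -
          c * (Real.exp (γ*tb) * (Real.sinh (α*y) * (α*1)))) y := by
      intro y hy
      have h1 := hasDerivAt_F' hy
      have h2 : HasDerivAt (fun z => u z tb) (ux u y tb) y :=
        ((hpde tb htbpos y hy).1).hasDerivAt
      have h3 : HasDerivAt (fun z => c * (Real.exp (γ*tb) * Real.cosh (α*z) - Real.cosh (α*r)))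
          (c * (Real.exp (γ*tb) * (Real.sinh (α*y) * (α*1)))) y :=
        ((((hasDerivAt_id y).const_mul α).cosh.const_mul (Real.exp (γ*tb))).sub_const
          (Real.cosh (α*r))).const_mul c
      have h4 := ((h1.sub h2).sub h3).add_const (u0 0 + (π/2 + ε)*tb)
      simp only [hfdef, hWdef]
      exact h4
    have hfev : ∀ᶠ y in 𝓝 xb, DifferentiableAt ℝ f y := by
      filter_upwards [isOpen_Ioo.mem_nhds hxb1] with y hy
      exact (hfd y hy).differentiableAt
    have hderiv0 : Real.tan (π*xb/2) - ux u xb tb -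
        c * (Real.exp (γ*tb) * (Real.sinh (α*xb) * (α*1))) = 0 := by
      rw [← (hfd xb hxb1).deriv]
      exact hfmin.deriv_eq_zero
    set G : ℝ → ℝ := fun y => Real.tan (π*y/2) - ux u y tb -
      c * (Real.exp (γ*tb) * (Real.sinh (α*y) * (α*1))) with hGdef
    have hgE : deriv f =ᶠ[𝓝 xb] G := by
      filter_upwards [isOpen_Ioo.mem_nhds hxb1] with y hy
      simp only [hGdef]
      exact (hfd y hy).deriv
    have hGd : HasDerivAt G (π/2*(1 + Real.tan (π*xb/2)^2) - uxx u xb tb -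
        c * (Real.exp (γ*tb) * (Real.cosh (α*xb) * (α*1) * (α*1)))) xb := by
      have g1 := hasDerivAt_tanhalf' hxb1
      have g2 : HasDerivAt (fun y => ux u y tb) (uxx u xb tb) xb := huxd.hasDerivAt
      have g3 : HasDerivAt (fun y => c * (Real.exp (γ*tb) * (Real.sinh (α*y) * (α*1))))
          (c * (Real.exp (γ*tb) * (Real.cosh (α*xb) * (α*1) * (α*1)))) xb :=
        ((((hasDerivAt_id xb).const_mul α).sinh.mul_const (α*1)).const_mul
          (Real.exp (γ*tb))).const_mul c
      exact (g1.sub g2).sub g3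
    have hdG : DifferentiableAt ℝ (deriv f) xb :=
      (hgE.differentiableAt_iff).2 hGd.differentiableAt
    have h2nd := second_deriv_test_min' hfev hfmin hdG
    rw [hgE.deriv_eq, hGd.deriv] at h2nd
    -- t-slice analysis
    set m : ℝ → ℝ := fun s => W (xb, s) with hmdef
    have hmmin : ∀ s ∈ Set.Icc (0:ℝ) t0, m tb ≤ m s := fun s hs => hminOn ⟨hxbI, hs⟩
    have hmd : HasDerivAt m ((0 - ut u xb tb -
        c * (Real.exp (γ*tb) * (γ*1) * Real.cosh (α*xb))) + (π/2 + ε)*1) tb := by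
      have m1 : HasDerivAt (fun s => u xb s) (ut u xb tb) tb := hutd.hasDerivAt
      have m2 : HasDerivAt (fun s => c * (Real.exp (γ*s) * Real.cosh (α*xb) - Real.cosh (α*r)))
          (c * (Real.exp (γ*tb) * (γ*1) * Real.cosh (α*xb))) tb :=
        ((((hasDerivAt_id tb).const_mul γ).exp.mul_const (Real.cosh (α*xb))).sub_const
          (Real.cosh (α*r))).const_mul c
      have m3 : HasDerivAt (fun s : ℝ => u0 0 + (π/2 + ε)*s) ((π/2+ε)*1) tb :=
        ((hasDerivAt_id tb).const_mul (π/2+ε)).const_add (u0 0)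
      have m4 := (((hasDerivAt_const tb
        (-(2/π) * Real.log (Real.cos (π * xb / 2)))).sub m1).sub m2).add m3
      simp only [hmdef, hWdef]
      exact m4
    have hmderiv : deriv m tb ≤ 0 :=
      deriv_nonpos_of_left_min' htbpos htbI.2 hmmin hmd.differentiableAt
    rw [hmd.deriv] at hmderiv
    -- the tan bound
    have hq_abs : |Real.tan (π*xb/2)| ≤ P := by
      have hangle : π*r/2 < π/2 := by linarith [mul_lt_mul_of_pos_left hr1 hπ]
      have hxb2 : |π*xb/2| ≤ π*r/2 := by
        rw [abs_div, abs_mul, abs_of_pos hπ, abs_two]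
        have := mul_le_mul_of_nonneg_left hxbabs hπ.le
        linarith
      have htan : Real.tan |π*xb/2| ≤ P := by
        rw [hPdef]
        rcases eq_or_lt_of_le hxb2 with h|h
        · rw [h]
        · exact (Real.tan_lt_tan_of_nonneg_of_lt_pi_div_two (abs_nonneg _) hangle h).le
      rcases le_or_gt 0 (π*xb/2) with h|h
      · rw [abs_of_nonneg h] at htan
        rwa [abs_of_nonneg (Real.tan_nonneg_of_nonneg_of_le_pi_div_two h
          (by linarith [mul_le_mul_of_nonneg_left hxb1.2.le hπ.le]))]
      · rw [abs_of_neg h, Real.tan_neg] at htan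
        have htneg : Real.tan (π*xb/2) ≤ 0 := by
          have h8 := Real.tan_nonneg_of_nonneg_of_le_pi_div_two
            (show 0 ≤ -(π*xb/2) by linarith)
            (by linarith [mul_le_mul_of_nonneg_left (show -xb ≤ 1 by linarith [hxb1.1]) hπ.le])
          rw [Real.tan_neg] at h8
          linarith
        rw [abs_of_nonpos htneg]
        linarith
    -- assemble the contradiction
    have hcE : 0 < c * Real.exp (γ*tb) := mul_pos hc0 (Real.exp_pos _)
    have hA0 : 0 < c * Real.exp (γ*tb) * Real.cosh (α*xb) := mul_pos hcE (Real.cosh_pos _)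
    have hs1 : Real.sinh (α*xb) < Real.cosh (α*xb) := Real.sinh_lt_cosh _
    have hs2 : -Real.cosh (α*xb) < Real.sinh (α*xb) := by
      have h9 := Real.sinh_lt_cosh (-(α*xb))
      rw [Real.sinh_neg, Real.cosh_neg] at h9
      linarith
    have hSA2 : c * (Real.exp (γ*tb) * (Real.sinh (α*xb) * (α*1))) ≤
        α * (c * Real.exp (γ*tb) * Real.cosh (α*xb)) := by
      linarith [mul_nonneg (mul_nonneg hcE.le hα0.le) (sub_nonneg.2 hs1.le)]
    have hSA1 : -(α * (c * Real.exp (γ*tb) * Real.cosh (α*xb))) ≤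
        c * (Real.exp (γ*tb) * (Real.sinh (α*xb) * (α*1))) := by
      linarith [mul_nonneg (mul_nonneg hcE.le hα0.le) (sub_nonneg.2 hs2.le)]
    have hXK : |ux u xb tb| ≤ K := by
      have h10 := hK (xb, tb) ⟨hxbI, htbI⟩
      rwa [Real.norm_eq_abs] at h10
    obtain ⟨hXk1, hXk2⟩ := abs_le.1 hXK
    have hXqS : ux u xb tb = Real.tan (π*xb/2) -
        c * (Real.exp (γ*tb) * (Real.sinh (α*xb) * (α*1))) := by linarith [hderiv0]
    have hX2K : (Real.tan (π*xb/2) -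
        c * (Real.exp (γ*tb) * (Real.sinh (α*xb) * (α*1))))^2 ≤ K^2 := by
      rw [← hXqS]
      exact sq_le_sq' hXk1 hXk2
    have hutge : π/2 + ε - γ * (c * Real.exp (γ*tb) * Real.cosh (α*xb)) ≤ ut u xb tb := by
      have e : c * (Real.exp (γ*tb) * (γ*1) * Real.cosh (α*xb)) =
          γ * (c * Real.exp (γ*tb) * Real.cosh (α*xb)) := by ring
      linarith [hmderiv, e]
    have huxxle : uxx u xb tb ≤ π/2*(1 + Real.tan (π*xb/2)^2) -
        α^2 * (c * Real.exp (γ*tb) * Real.cosh (α*xb)) := by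
      have e : c * (Real.exp (γ*tb) * (Real.cosh (α*xb) * (α*1) * (α*1))) =
          α^2 * (c * Real.exp (γ*tb) * Real.cosh (α*xb)) := by ring
      linarith [h2nd, e]
    have h1X : (0:ℝ) < 1 + ux u xb tb ^ 2 := by positivity
    have hmul : (π/2 + ε - γ * (c * Real.exp (γ*tb) * Real.cosh (α*xb))) *
        (1 + ux u xb tb ^ 2) ≤ uxx u xb tb := by
      have h5 := mul_le_mul_of_nonneg_right hutge h1X.le
      rw [hpdeq, div_mul_cancel₀ _ h1X.ne'] at h5
      exact h5
    have hbig := hmul.trans huxxle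
    rw [hXqS] at hbig
    exact final_contra hbig hX2K hSA1 hSA2 (abs_le.1 hq_abs).1 (abs_le.1 hq_abs).2 hγK hMdef
      hA0 hγ0.le hα0 hP0 hε
  -- pass to the limit and conclude
  have hZ := nonneg_of_forall_eps ht0 main
  have hH0 : 0 < c * (Real.exp (γ*t0) * Real.cosh (α*x0) - Real.cosh (α*r)) := by
    apply mul_pos hc0
    have h1 : Real.cosh (α*r) ≤ Real.exp (α*r) := by
      rw [Real.cosh_eq]
      have h2 : Real.exp (-(α*r)) ≤ Real.exp (α*r) := Real.exp_le_exp.2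
        (by linarith [mul_nonneg hα0.le hr0.le])
      linarith
    have h2 : Real.exp (α*r) < Real.exp (γ*t0) := Real.exp_lt_exp.2 hαrγ
    have h3 : 1 ≤ Real.cosh (α*x0) := Real.one_le_cosh _
    have h4 := mul_le_mul_of_nonneg_left h3 (Real.exp_pos (γ*t0)).le
    linarith
  rw [hφ0 x0]
  linarith [hZ, hH0]
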